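/- Let p be a prime with p ≡ 3 (mod 8). Then the set {π ∈ 𝒫(p) : π₀ ≠ 0} has even cardinality, and the set {π ∈ 𝒫(p) : π₀ = 0} is nonempty and has even cardinality. -/

import Mathlib

open Quaternion

/-- The content of an integral quaternion: the gcd of its four coordinates. -/
def content (a : ℍ[ℤ]) : ℕ :=
  Int.gcd (Int.gcd a.re a.imI) (Int.gcd a.imJ a.imK)

/-- An integral quaternion is primitive if its content is `1`. -/
def Primitive (a : ℍ[ℤ]) : Prop := content a = 1

/-- The eight units of `ℍ[ℤ]`: `±1, ±i, ±j, ±k`. -/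
def quatUnits : Set ℍ[ℤ] :=
  {1, -1, ⟨0, 1, 0, 0⟩, ⟨0, -1, 0, 0⟩, ⟨0, 0, 1, 0⟩, ⟨0, 0, -1, 0⟩, ⟨0, 0, 0, 1⟩, ⟨0, 0, 0, -1⟩}

/-- The distinguished set `𝒫(p)` of quaternions of norm `p` (for an odd prime `p`). -/
def Pset (p : ℕ) : Set ℍ[ℤ] :=
  {π | Primitive π ∧ Quaternion.normSq π = (p : ℤ) ∧
    (if p % 4 = 1 then
      0 < π.re ∧ ∃ β : ℍ[ℤ], π - 1 = 2 * β
    else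
      (∃ β : ℍ[ℤ], π - ⟨0, 1, 1, 1⟩ = 2 * β) ∧
        (π.re ≠ 0 → 0 < π.re) ∧ (π.re = 0 → 0 < π.imI))}

lemma even_ncard_invol {α : Type*} {S : Set α} (hS : S.Finite) (g : α → α)
    (h1 : ∀ a ∈ S, g a ∈ S) (h2 : ∀ a ∈ S, g (g a) = a) (h3 : ∀ a ∈ S, g a ≠ a) :
    Even S.ncard := by
  classical
  rw [Set.ncard_eq_toFinset_card _ hS]
  have key : (∑ _x ∈ hS.toFinset, (1 : ZMod 2)) = 0 := by
    refine Finset.sum_involution (fun a _ => g a) (fun a ha => by decide) ?_ ?_ ?_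
    · intro a ha _
      exact h3 a (hS.mem_toFinset.mp ha)
    · intro a ha
      exact hS.mem_toFinset.mpr (h1 a (hS.mem_toFinset.mp ha))
    · intro a ha
      exact h2 a (hS.mem_toFinset.mp ha)
  rw [Finset.sum_const, nsmul_eq_mul, mul_one] at key
  exact even_iff_two_dvd.mpr ((ZMod.natCast_eq_zero_iff _ 2).mp key)

lemma abs_le_of_sq_le {x c : ℤ} (h : x ^ 2 ≤ c) : -c ≤ x ∧ x ≤ c := by
  have habs : |x| ≤ x ^ 2 := by
    rcases le_or_gt 1 |x| with h1 | h1
    · calc |x| = |x| * 1 := (mul_one _).symm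
        _ ≤ |x| * |x| := by exact mul_le_mul_of_nonneg_left h1 (abs_nonneg x)
        _ = x ^ 2 := by rw [← sq_abs]; ring
    · have h0 : |x| = 0 := le_antisymm (by omega) (abs_nonneg x)
      rw [h0]; exact sq_nonneg x
  exact abs_le.mp (habs.trans h)

lemma normSq_finite (c : ℤ) : {π : ℍ[ℤ] | Quaternion.normSq π = c}.Finite := by
  have hsub : {π : ℍ[ℤ] | Quaternion.normSq π = c} ⊆
      (fun π : ℍ[ℤ] => (π.re, π.imI, π.imJ, π.imK)) ⁻¹'
        (Set.Icc (-c) c ×ˢ Set.Icc (-c) c ×ˢ Set.Icc (-c) c ×ˢ Set.Icc (-c) c) := by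
    intro π hπ
    simp only [Set.mem_setOf_eq] at hπ
    rw [Quaternion.normSq_def'] at hπ
    have q1 := sq_nonneg π.re
    have q2 := sq_nonneg π.imI
    have q3 := sq_nonneg π.imJ
    have q4 := sq_nonneg π.imK
    simp only [Set.mem_preimage, Set.mem_prod, Set.mem_Icc]
    exact ⟨abs_le_of_sq_le (by linarith), abs_le_of_sq_le (by linarith),
      abs_le_of_sq_le (by linarith), abs_le_of_sq_le (by linarith)⟩
  refine Set.Finite.subset (Set.Finite.preimage ?_ ?_) hsub
  · intro a _ b _ h
    simp only [Prod.mk.injEq] at h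
    exact QuaternionAlgebra.ext h.1 h.2.1 h.2.2.1 h.2.2.2
  · exact ((Set.finite_Icc _ _).prod (((Set.finite_Icc _ _)).prod
      ((Set.finite_Icc _ _).prod (Set.finite_Icc _ _))))

lemma beta_iff (π : ℍ[ℤ]) :
    (∃ β : ℍ[ℤ], π - ⟨0, 1, 1, 1⟩ = 2 * β) ↔
      (∃ a, π.re = 2 * a) ∧ (∃ b, π.imI = 2 * b + 1) ∧
      (∃ c, π.imJ = 2 * c + 1) ∧ (∃ d, π.imK = 2 * d + 1) := by
  constructor
  · rintro ⟨β, hβ⟩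
    rw [two_mul] at hβ
    have h1 := congrArg QuaternionAlgebra.re hβ
    have h2 := congrArg QuaternionAlgebra.imI hβ
    have h3 := congrArg QuaternionAlgebra.imJ hβ
    have h4 := congrArg QuaternionAlgebra.imK hβ
    simp at h1 h2 h3 h4
    change π.re - 0 = _ at h1
    change π.imI - 1 = _ at h2
    change π.imJ - 1 = _ at h3
    change π.imK - 1 = _ at h4
    exact ⟨⟨β.re, by omega⟩, ⟨β.imI, by omega⟩, ⟨β.imJ, by omega⟩, ⟨β.imK, by omega⟩⟩
  · rintro ⟨⟨a, ha⟩, ⟨b, hb⟩, ⟨c, hc⟩, ⟨d, hd⟩⟩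
    refine ⟨⟨a, b, c, d⟩, ?_⟩
    change π - (show ℍ[ℤ] from ⟨0, 1, 1, 1⟩) = 2 * (show ℍ[ℤ] from ⟨a, b, c, d⟩)
    rw [two_mul]
    ext
    · change π.re - 0 = a + a; rw [ha]; ring
    · change π.imI - 1 = b + b; rw [hb]; ring
    · change π.imJ - 1 = c + c; rw [hc]; ring
    · change π.imK - 1 = d + d; rw [hd]; ring

lemma exists_sq_add_two_sq (p : ℕ) (hp : p.Prime) (hp8 : p % 8 = 3) :
    ∃ x y : ℤ, x ^ 2 + 2 * y ^ 2 = (p : ℤ) := by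
  haveI : Fact p.Prime := ⟨hp⟩
  have hp2 : p ≠ 2 := by omega
  have hple : 2 ≤ p := hp.two_le
  obtain ⟨r, hr⟩ : IsSquare (-2 : ZMod p) :=
    (ZMod.exists_sq_eq_neg_two_iff hp2).mpr (Or.inr hp8)
  set n := Nat.sqrt p with hn
  have hlt : p < (n + 1) * (n + 1) := Nat.lt_succ_sqrt p
  have hn2 : n * n < p := by
    rcases lt_or_eq_of_le (Nat.sqrt_le p) with h | h
    · exact h
    · exfalso
      rcases (hp.eq_one_or_self_of_dvd n ⟨n, h.symm⟩) with h1 | h1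
      · rw [← hn, h1] at h; omega
      · rw [← hn, h1] at h; nlinarith
  set s : Finset (ℤ × ℤ) := Finset.Icc 0 (n : ℤ) ×ˢ Finset.Icc 0 (n : ℤ) with hs
  have hcard : s.card = (n + 1) * (n + 1) := by
    rw [hs, Finset.card_product, Int.card_Icc]
    simp
  have hmaps : ∀ uv ∈ s, (fun uv : ℤ × ℤ => ((uv.1 : ZMod p) - r * (uv.2 : ZMod p))) uv ∈
      (Finset.univ : Finset (ZMod p)) := fun _ _ => Finset.mem_univ _
  have hclt : (Finset.univ : Finset (ZMod p)).card < s.card := by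
    rw [hcard, Finset.card_univ, ZMod.card]
    exact hlt
  obtain ⟨u, hu, v, hv, huv, heq⟩ := Finset.exists_ne_map_eq_of_card_lt_of_maps_to hclt hmaps
  have heq' : (u.1 : ZMod p) - r * (u.2 : ZMod p) = (v.1 : ZMod p) - r * (v.2 : ZMod p) := heq
  set a : ℤ := u.1 - v.1 with ha
  set b : ℤ := u.2 - v.2 with hb
  have hab : ((a : ZMod p)) = r * (b : ZMod p) := by
    push_cast [ha, hb]
    linear_combination heq'
  have hdvd : (p : ℤ) ∣ a ^ 2 + 2 * b ^ 2 := by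
    rw [← ZMod.intCast_zmod_eq_zero_iff_dvd]
    push_cast
    rw [hab]
    linear_combination (-((b : ZMod p) ^ 2)) * hr
  simp only [hs, Finset.mem_product, Finset.mem_Icc] at hu hv
  have hbnd : a ^ 2 + 2 * b ^ 2 < 3 * p := by
    have h1 : a ^ 2 ≤ (n : ℤ) * n := by nlinarith [hu.1.1, hu.1.2, hv.1.1, hv.1.2]
    have h2 : b ^ 2 ≤ (n : ℤ) * n := by nlinarith [hu.2.1, hu.2.2, hv.2.1, hv.2.2]
    have : (n : ℤ) * n < p := by exact_mod_cast hn2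
    linarith
  have hpos : 0 < a ^ 2 + 2 * b ^ 2 := by
    rcases eq_or_ne a 0 with h | h
    · have hb0 : b ≠ 0 := by
        intro h0
        apply huv
        have e1 : u.1 = v.1 := by omega
        have e2 : u.2 = v.2 := by omega
        exact Prod.ext e1 e2
      positivity
    · positivity
  clear_value a b
  clear heq heq' hmaps hclt hab hr ha hb hu hv huv r u v hcard s hs
  obtain ⟨k, hk⟩ := hdvd
  have hk12 : k = 1 ∨ k = 2 := by
    have hppos : (0 : ℤ) < p := by exact_mod_cast hp.pos
    have : 0 < k := by nlinarith
    have : k < 3 := by nlinarith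
    omega
  rcases hk12 with h | h
  · rw [h, mul_one] at hk; exact ⟨a, b, hk⟩
  · rw [h] at hk
    have haeven : Even a := by
      have : Even (a ^ 2) := by
        have h2 : a ^ 2 = 2 * ((p : ℤ) - b ^ 2) := by linarith
        exact ⟨(p : ℤ) - b ^ 2, by linarith⟩
      rcases Int.even_or_odd a with h' | h'
      · exact h'
      · exfalso
        obtain ⟨m, hm⟩ := h'
        obtain ⟨t, ht⟩ := this
        have hz : a ^ 2 = 2 * (2 * m ^ 2 + 2 * m) + 1 := by rw [hm]; ring
        omega
    obtain ⟨c, hc⟩ := haeven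
    refine ⟨b, c, ?_⟩
    rw [hc] at hk
    exact mul_left_cancel₀ (two_ne_zero) (by linear_combination hk)

theorem stmt_11 (p : ℕ) (hp : p.Prime) (hp8 : p % 8 = 3) :
    Even {π ∈ Pset p | π.re ≠ 0}.ncard ∧
    {π ∈ Pset p | π.re = 0}.Nonempty ∧
    Even {π ∈ Pset p | π.re = 0}.ncard := by
  have hp4 : ¬ (p % 4 = 1) := by omega
  have hmem : ∀ π : ℍ[ℤ], π ∈ Pset p ↔ Primitive π ∧ Quaternion.normSq π = (p : ℤ) ∧
      ((∃ β : ℍ[ℤ], π - ⟨0, 1, 1, 1⟩ = 2 * β) ∧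
        (π.re ≠ 0 → 0 < π.re) ∧ (π.re = 0 → 0 < π.imI)) := by
    intro π
    rw [Pset, Set.mem_setOf_eq, if_neg hp4]
  have hfin : ∀ T : Set ℍ[ℤ], T ⊆ Pset p → T.Finite := by
    intro T hT
    refine (normSq_finite (p : ℤ)).subset (fun π hπ => ?_)
    exact ((hmem π).mp (hT hπ)).2.1
  refine ⟨?_, ?_, ?_⟩
  · -- even cardinality of the nonzero real part elements, via conjugation
    refine even_ncard_invol (hfin _ (fun π hπ => hπ.1)) (star) ?_ ?_ ?_
    · rintro π ⟨hπ, hre⟩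
      obtain ⟨hprim, hnorm, hβ, hsign, _⟩ := (hmem π).mp hπ
      obtain ⟨⟨a, ha⟩, ⟨b, hb⟩, ⟨c, hc⟩, ⟨d, hd⟩⟩ := (beta_iff π).mp hβ
      refine ⟨(hmem _).mpr ⟨?_, ?_, ?_, ?_, ?_⟩, ?_⟩
      · unfold Primitive content at hprim ⊢
        simpa [Int.gcd] using hprim
      · rwa [Quaternion.normSq_star]
      · refine (beta_iff _).mpr ⟨⟨a, by simpa using ha⟩, ⟨-b - 1, by simp [hb]; ring⟩,
          ⟨-c - 1, by simp [hc]; ring⟩, ⟨-d - 1, by simp [hd]; ring⟩⟩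
      · intro _; simpa using hsign (by simpa using hre)
      · intro h; exact absurd (by simpa using h) hre
      · simpa using hre
    · rintro π _; exact star_star π
    · rintro π ⟨hπ, _⟩
      obtain ⟨_, _, hβ, _, _⟩ := (hmem π).mp hπ
      obtain ⟨_, ⟨b, hb⟩, _, _⟩ := (beta_iff π).mp hβ
      intro hcontra
      have := congrArg QuaternionAlgebra.imI hcontra
      simp at this
      omega
  · -- nonemptiness
    obtain ⟨x, y, hxy⟩ := exists_sq_add_two_sq p hp hp8
    have hp8' : ((p : ℕ) : ZMod 8) = 3 := by
      rw [← ZMod.natCast_mod p 8, hp8]; norm_num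
    have hcast : ((x : ZMod 8)) ^ 2 + 2 * ((y : ZMod 8)) ^ 2 = 3 := by
      have h := congrArg (fun t : ℤ => (t : ZMod 8)) hxy
      push_cast at h
      rw [hp8'] at h
      exact h
    have hx_odd : Odd x := by
      rcases Int.even_or_odd x with ⟨c, hc⟩ | h
      · exfalso
        rw [hc] at hcast
        push_cast at hcast
        exact (by decide : ∀ a b : ZMod 8, ¬ ((a + a) ^ 2 + 2 * b ^ 2 = 3)) _ _ hcast
      · exact h
    have hy_odd : Odd y := by
      rcases Int.even_or_odd y with ⟨c, hc⟩ | h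
      · exfalso
        rw [hc] at hcast
        push_cast at hcast
        exact (by decide : ∀ a b : ZMod 8, ¬ (a ^ 2 + 2 * (b + b) ^ 2 = 3)) _ _ hcast
      · exact h
    set X : ℕ := x.natAbs with hX
    set Y : ℕ := y.natAbs with hY
    have hX2 : ((X : ℤ)) ^ 2 = x ^ 2 := by rw [hX, Nat.cast_natAbs]; push_cast; rw [sq_abs]
    have hY2 : ((Y : ℤ)) ^ 2 = y ^ 2 := by rw [hY, Nat.cast_natAbs]; push_cast; rw [sq_abs]
    have hXodd : Odd X := by rwa [hX, Int.natAbs_odd]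
    have hYodd : Odd Y := by rwa [hY, Int.natAbs_odd]
    refine ⟨⟨0, (X : ℤ), (Y : ℤ), (Y : ℤ)⟩, (hmem _).mpr ⟨?_, ?_, ?_, ?_, ?_⟩, rfl⟩
    · -- primitivity
      unfold Primitive content
      simp only [Int.gcd]
      show Nat.gcd (Nat.gcd (Int.natAbs 0) (Int.natAbs X))
          (Nat.gcd (Int.natAbs Y) (Int.natAbs Y)) = 1
      simp only [Int.natAbs_zero, Nat.gcd_zero_left, Int.natAbs_natCast, Nat.gcd_self]
      -- goal : Nat.gcd X Y = 1
      set g := Nat.gcd X Y with hg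
      have hgx : (g : ℤ) ∣ x :=
        dvd_trans (Int.natCast_dvd_natCast.mpr (Nat.gcd_dvd_left X Y)) (Int.natAbs_dvd.mpr dvd_rfl)
      have hgy : (g : ℤ) ∣ y :=
        dvd_trans (Int.natCast_dvd_natCast.mpr (Nat.gcd_dvd_right X Y)) (Int.natAbs_dvd.mpr dvd_rfl)
      have hsq : (g : ℤ) ^ 2 ∣ (p : ℤ) := by
        rw [← hxy]
        obtain ⟨x', hx'⟩ := hgx
        obtain ⟨y', hy'⟩ := hgy
        exact ⟨x' ^ 2 + 2 * y' ^ 2, by rw [hx', hy']; ring⟩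
      have hsqn : g ^ 2 ∣ p := by exact_mod_cast hsq
      rcases hp.eq_one_or_self_of_dvd _ hsqn with h1 | h1
      · rw [pow_two] at h1
        exact Nat.eq_one_of_mul_eq_one_right h1
      · exfalso
        have hgp : g ∣ p := ⟨g, by rw [← h1]; ring⟩
        rcases hp.eq_one_or_self_of_dvd _ hgp with h2 | h2
        · rw [h2] at h1; simp at h1; omega
        · rw [h2] at h1
          have := hp.two_le
          nlinarith
    · rw [Quaternion.normSq_def' (a := (⟨0, (X : ℤ), (Y : ℤ), (Y : ℤ)⟩ : ℍ[ℤ]))]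
      show (0 : ℤ) ^ 2 + (X : ℤ) ^ 2 + (Y : ℤ) ^ 2 + (Y : ℤ) ^ 2 = (p : ℤ)
      rw [hX2, hY2]; linarith
    · refine (beta_iff _).mpr ⟨⟨0, by simp⟩, ?_, ?_, ?_⟩
      · obtain ⟨b, hb⟩ := hXodd
        exact ⟨(b : ℤ), by show ((X : ℤ)) = 2 * b + 1; rw [hb]; push_cast; ring⟩
      · obtain ⟨b, hb⟩ := hYodd
        exact ⟨(b : ℤ), by show ((Y : ℤ)) = 2 * b + 1; rw [hb]; push_cast; ring⟩
      · obtain ⟨b, hb⟩ := hYodd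
        exact ⟨(b : ℤ), by show ((Y : ℤ)) = 2 * b + 1; rw [hb]; push_cast; ring⟩
    · intro h; exact absurd rfl h
    · intro _
      show (0 : ℤ) < (X : ℤ)
      have : X ≠ 0 := by
        intro h
        rw [h] at hXodd
        have := Nat.odd_iff.mp hXodd
        omega
      positivity
  · -- even cardinality of zero real part elements, via (b,c,d) ↦ (b,-c,-d)
    refine even_ncard_invol (hfin _ (fun π hπ => hπ.1))
      (fun π => ⟨π.re, π.imI, -π.imJ, -π.imK⟩) ?_ ?_ ?_
    · rintro π ⟨hπ, hre⟩
      obtain ⟨hprim, hnorm, hβ, _, hsign⟩ := (hmem π).mp hπ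
      obtain ⟨⟨a, ha⟩, ⟨b, hb⟩, ⟨c, hc⟩, ⟨d, hd⟩⟩ := (beta_iff π).mp hβ
      refine ⟨(hmem _).mpr ⟨?_, ?_, ?_, ?_, ?_⟩, hre⟩
      · unfold Primitive content at hprim ⊢
        simpa [Int.gcd] using hprim
      · rw [Quaternion.normSq_def'] at hnorm
        rw [Quaternion.normSq_def' (a := (⟨π.re, π.imI, -π.imJ, -π.imK⟩ : ℍ[ℤ]))]
        show π.re ^ 2 + π.imI ^ 2 + (-π.imJ) ^ 2 + (-π.imK) ^ 2 = (p : ℤ)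
        rw [neg_pow, neg_pow]; simpa using hnorm
      · exact (beta_iff _).mpr ⟨⟨a, ha⟩, ⟨b, hb⟩, ⟨-c - 1, by show -π.imJ = _; rw [hc]; ring⟩,
          ⟨-d - 1, by show -π.imK = _; rw [hd]; ring⟩⟩
      · intro h; exact absurd hre h
      · intro _; exact hsign hre
    · rintro π _
      ext <;> simp
    · rintro π ⟨hπ, _⟩
      obtain ⟨_, _, hβ, _, _⟩ := (hmem π).mp hπ
      obtain ⟨_, _, ⟨c, hc⟩, _⟩ := (beta_iff π).mp hβ
      intro hcontra
      have := congrArg QuaternionAlgebra.imJ hcontra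
      simp at this
      omega
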